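/- Assume t = d and that n_1, …, n_d are linearly independent (the toric algebra is simplicial). Let v, w ∈ ℝ^d, and let v₀, w₀ ∈ ℝ^d be the unique points with n_i(v₀) = ⌈n_i(v)⌉ and n_i(w₀) = ⌈n_i(w)⌉ for all i = 1,…,d. Then {f ∈ L : f·A_v ⊆ A_w} = A_{w₀ − v₀} as R-submodules of L; in particular Hom_R(A_v, A_w) is isomorphic as an R-module to the conic module A_{w₀ − v₀}. -/

import Mathlib

open Set

set_option synthInstance.maxHeartbeats 400000
set_option maxHeartbeats 1000000

noncomputable section

/-- The embedding of the lattice `ℤ^d` into `ℝ^d`. -/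
def ιZ (d : ℕ) (m : Fin d → ℤ) : Fin d → ℝ := fun j => (m j : ℝ)

/-- The lattice points of the translated cone `C + v`, where
`C = {x | ∀ i, 0 ≤ n i x}`. -/
def latticePts {d t : ℕ} (n : Fin t → ((Fin d → ℝ) →ₗ[ℝ] ℝ)) (v : Fin d → ℝ) :
    Set (Fin d → ℤ) :=
  {m | ∀ i, 0 ≤ n i (ιZ d m - v)}

/-- The toric algebra `R = k[C ∩ ℤ^d]`: the `k`-subalgebra of the Laurent
polynomial algebra `L = AddMonoidAlgebra k (Fin d → ℤ)` spanned (equivalently,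
generated, since the monomial set is closed under multiplication and contains `1`)
by the monomials `x^m` with `m ∈ C ∩ ℤ^d`. -/
def toricR (k : Type) [Field k] (d t : ℕ) (n : Fin t → ((Fin d → ℝ) →ₗ[ℝ] ℝ)) :
    Subalgebra k (AddMonoidAlgebra k (Fin d → ℤ)) :=
  Algebra.adjoin k
    {f | ∃ m : Fin d → ℤ, (∀ i, 0 ≤ n i (ιZ d m)) ∧ f = AddMonoidAlgebra.single m 1}

/-- The conic module `A_v`: the `R`-submodule of `L` spanned by the monomials `x^m`
with `m ∈ (C + v) ∩ ℤ^d`. -/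
def conicA (k : Type) [Field k] (d t : ℕ) (n : Fin t → ((Fin d → ℝ) →ₗ[ℝ] ℝ))
    (v : Fin d → ℝ) :
    Submodule ↥(toricR k d t n) (AddMonoidAlgebra k (Fin d → ℤ)) :=
  Submodule.span ↥(toricR k d t n)
    {f | ∃ m : Fin d → ℤ, (∀ i, 0 ≤ n i (ιZ d m - v)) ∧ f = AddMonoidAlgebra.single m 1}


lemma ιZ_add (d : ℕ) (a b : Fin d → ℤ) : ιZ d (a + b) = ιZ d a + ιZ d b := by
  funext j; simp [ιZ]

lemma ιZ_zero (d : ℕ) : ιZ d 0 = 0 := by funext j; simp [ιZ]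

lemma ιZ_zsmul (d : ℕ) (z : ℤ) (a : Fin d → ℤ) : ιZ d (z • a) = (z : ℝ) • ιZ d a := by
  funext j; simp [ιZ]

lemma ιZ_sub (d : ℕ) (a b : Fin d → ℤ) : ιZ d (a - b) = ιZ d a - ιZ d b := by
  funext j; simp [ιZ]

lemma ιZ_sum (d : ℕ) {s : Finset (Fin d)} (x : Fin d → (Fin d → ℤ)) :
    ιZ d (∑ j ∈ s, x j) = ∑ j ∈ s, ιZ d (x j) := by
  classical
  induction s using Finset.induction with
  | empty => simp [ιZ_zero]
  | insert _ _ h ih => rw [Finset.sum_insert h, Finset.sum_insert h, ιZ_add, ih]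

lemma ιZ_single (d : ℕ) (j : Fin d) : ιZ d (Pi.single j 1) = (Pi.single j 1 : Fin d → ℝ) := by
  funext l; by_cases h : l = j <;> simp [ιZ, Pi.single_apply, h]

lemma pi_decomp (d : ℕ) (x : Fin d → ℝ) : x = ∑ j, x j • (Pi.single j 1 : Fin d → ℝ) := by
  funext l
  rw [Finset.sum_apply]
  simp [Pi.single_apply]

section

variable {d : ℕ} (n : Fin d → ((Fin d → ℝ) →ₗ[ℝ] ℝ))

lemma ceil_le_val (hint : ∀ i (m : Fin d → ℤ), ∃ z : ℤ, n i (ιZ d m) = z)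
    (i : Fin d) (m : Fin d → ℤ) (a : ℝ) :
    a ≤ n i (ιZ d m) ↔ (⌈a⌉ : ℝ) ≤ n i (ιZ d m) := by
  obtain ⟨z, hz⟩ := hint i m
  rw [hz]
  exact_mod_cast (Int.ceil_le (z := z) (a := a)).symm

/-- existence of positive "axis" lattice vectors -/
lemma exists_axes (hint : ∀ i (m : Fin d → ℤ), ∃ z : ℤ, n i (ιZ d m) = z)
    (hsimp : LinearIndependent ℝ n) :
    ∃ (u : Fin d → (Fin d → ℤ)) (D : ℤ), 0 < D ∧
      ∀ i j, n i (ιZ d (u j)) = if i = j then (D : ℝ) else 0 := by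
  classical
  choose M hM using fun i j => hint i (Pi.single j 1)
  have neval : ∀ i (m : Fin d → ℤ), n i (ιZ d m) =
      (((Matrix.of M).mulVec m) i : ℝ) := by
    intro i m
    conv_lhs => rw [pi_decomp d (ιZ d m), map_sum]
    simp only [map_smul, smul_eq_mul]
    have heq : ∀ j, n i ((Pi.single j 1 : Fin d → ℝ)) = (M i j : ℝ) := by
      intro j; rw [← ιZ_single, hM i j]
    simp only [heq]
    simp only [Matrix.mulVec, dotProduct, Matrix.of_apply]
    push_cast
    exact Finset.sum_congr rfl fun j _ => mul_comm _ _
  set A : Matrix (Fin d) (Fin d) ℝ := (Matrix.of M).map (Int.cast : ℤ → ℝ) with hA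
  have hrows : LinearIndependent ℝ (fun i => A i) := by
    let E : ((Fin d → ℝ) →ₗ[ℝ] ℝ) →ₗ[ℝ] (Fin d → ℝ) :=
      LinearMap.pi (fun j => LinearMap.applyₗ (Pi.single j (1:ℝ)))
    have hker : LinearMap.ker E = ⊥ := by
      rw [LinearMap.ker_eq_bot']
      intro φ hφ
      refine LinearMap.ext fun x => ?_
      conv_lhs => rw [pi_decomp d x, map_sum]
      simp only [map_smul, smul_eq_mul]
      have : ∀ j, φ (Pi.single j 1) = 0 := by
        intro j
        have := congrFun hφ j
        simpa [E, LinearMap.pi_apply] using this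
      simp [this]
    have h2 := hsimp.map' E hker
    have : (fun i => A i) = ⇑E ∘ n := by
      funext i; funext j
      simp only [hA, Matrix.map_apply, Matrix.of_apply, Function.comp_apply, E,
        LinearMap.pi_apply]
      rw [← hM i j, ιZ_single]
      rfl
    rw [this]; exact h2
  have hdetA : ((Matrix.of M).det : ℝ) ≠ 0 := by
    have h := (Matrix.isUnit_iff_isUnit_det A).mp
      (Matrix.linearIndependent_rows_iff_isUnit.mp hrows)
    have : A.det = ((Matrix.of M).det : ℝ) := ((Int.castRingHom ℝ).map_det _).symm
    rw [this] at h
    exact h.ne_zero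
  have hdet : (Matrix.of M).det ≠ 0 := by exact_mod_cast hdetA
  set D₀ : ℤ := (Matrix.of M).det with hD₀
  set σ : ℤ := if 0 ≤ D₀ then 1 else -1 with hσ
  have hσD : 0 < σ * D₀ := by
    rcases lt_or_ge D₀ 0 with h | h
    · simp only [hσ, if_neg (not_le.mpr h)]; omega
    · have : D₀ ≠ 0 := hdet
      simp only [hσ, if_pos h]; omega
  refine ⟨fun j => fun i' => σ * (Matrix.of M).adjugate i' j, σ * D₀, hσD, ?_⟩
  intro i j
  rw [neval]
  have hadj := Matrix.mul_adjugate (Matrix.of M)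
  have hentry : ((Matrix.of M) * (Matrix.of M).adjugate) i j
      = D₀ * (if i = j then 1 else 0) := by
    rw [hadj]; simp [Matrix.smul_apply, Matrix.one_apply, hD₀]
  rw [Matrix.mul_apply] at hentry
  have : (Matrix.of M).mulVec (fun i' => σ * (Matrix.of M).adjugate i' j) i
      = σ * (D₀ * (if i = j then 1 else 0)) := by
    rw [← hentry]
    simp only [Matrix.mulVec, dotProduct, Finset.mul_sum]
    congr 1; funext l; ring
  rw [this]
  split <;> push_cast <;> ring

lemma neval_sum (u : Fin d → (Fin d → ℤ)) (K : Fin d → ℤ) (i : Fin d) :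
    n i (ιZ d (∑ j, K j • u j)) = ∑ j, (K j : ℝ) * n i (ιZ d (u j)) := by
  rw [ιZ_sum, map_sum]
  congr 1; funext j
  rw [ιZ_zsmul, map_smul, smul_eq_mul]

lemma exists_ge (hint : ∀ i (m : Fin d → ℤ), ∃ z : ℤ, n i (ιZ d m) = z)
    (hsimp : LinearIndependent ℝ n) (c : Fin d → ℝ) :
    ∃ m : Fin d → ℤ, ∀ i, c i ≤ n i (ιZ d m) := by
  obtain ⟨u, D, hD, hu⟩ := exists_axes n hint hsimp
  set K : Fin d → ℤ := fun j => max 0 ⌈c j⌉ with hK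
  refine ⟨∑ j, K j • u j, fun i => ?_⟩
  rw [neval_sum]
  simp only [hu]
  rw [Finset.sum_eq_single i]
  · simp only [if_pos rfl]
    have h1 : (⌈c i⌉ : ℤ) ≤ K i := le_max_right _ _
    have h2 : K i ≤ K i * D := by nlinarith [le_max_left 0 ⌈c i⌉]
    have : c i ≤ (K i : ℝ) := le_trans (Int.le_ceil _) (by exact_mod_cast h1)
    calc c i ≤ (K i : ℝ) := this
    _ ≤ ((K i * D : ℤ) : ℝ) := by exact_mod_cast h2
    _ = (K i : ℝ) * (D : ℝ) := by push_cast; ring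
  · intro b _ hb
    rw [if_neg (Ne.symm hb)]; ring
  · intro h; exact absurd (Finset.mem_univ i) h

lemma exists_eq_ge (hint : ∀ i (m : Fin d → ℤ), ∃ z : ℤ, n i (ιZ d m) = z)
    (hsimp : LinearIndependent ℝ n)
    (m₀ : Fin d → ℤ) (i : Fin d) (c : Fin d → ℝ) :
    ∃ m : Fin d → ℤ, n i (ιZ d m) = n i (ιZ d m₀) ∧
      ∀ j, j ≠ i → c j ≤ n j (ιZ d m) := by
  obtain ⟨u, D, hD, hu⟩ := exists_axes n hint hsimp
  set K : Fin d → ℤ := fun j => if j = i then 0 else max 0 ⌈c j - n j (ιZ d m₀)⌉ with hK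
  refine ⟨m₀ + ∑ j, K j • u j, ?_, ?_⟩
  · rw [ιZ_add, map_add]
    have : n i (ιZ d (∑ j, K j • u j)) = (K i : ℝ) * (D : ℝ) := by
      rw [neval_sum]
      simp only [hu]
      rw [Finset.sum_eq_single i]
      · simp
      · intro b _ hb; rw [if_neg (Ne.symm hb)]; ring
      · intro h; exact absurd (Finset.mem_univ i) h
    rw [this]
    simp [hK]
  · intro j hj
    rw [ιZ_add, map_add]
    have : n j (ιZ d (∑ l, K l • u l)) = (K j : ℝ) * (D : ℝ) := by
      rw [neval_sum]
      simp only [hu]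
      rw [Finset.sum_eq_single j]
      · simp
      · intro b _ hb; rw [if_neg (Ne.symm hb)]; ring
      · intro h; exact absurd (Finset.mem_univ j) h
    rw [this, hK]
    simp only [if_neg hj]
    have h1 : (⌈c j - n j (ιZ d m₀)⌉ : ℤ) ≤ max 0 ⌈c j - n j (ιZ d m₀)⌉ := le_max_right _ _
    have h2 : max 0 ⌈c j - n j (ιZ d m₀)⌉ ≤ max 0 ⌈c j - n j (ιZ d m₀)⌉ * D := by
      nlinarith [le_max_left 0 ⌈c j - n j (ιZ d m₀)⌉]
    have h3 : c j - n j (ιZ d m₀) ≤ ((max 0 ⌈c j - n j (ιZ d m₀)⌉ * D : ℤ) : ℝ) := by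
      calc c j - n j (ιZ d m₀) ≤ (⌈c j - n j (ιZ d m₀)⌉ : ℝ) := Int.le_ceil _
      _ ≤ ((max 0 ⌈c j - n j (ιZ d m₀)⌉ * D : ℤ) : ℝ) := by exact_mod_cast le_trans h1 h2
    push_cast at h3 ⊢
    linarith

end

section Alg
open AddMonoidAlgebra

variable {k : Type} [Field k] {d t : ℕ} (n : Fin t → ((Fin d → ℝ) →ₗ[ℝ] ℝ))

lemma single_mem_toricR {m : Fin d → ℤ} (h : ∀ i, 0 ≤ n i (ιZ d m)) :
    AddMonoidAlgebra.single m (1:k) ∈ toricR k d t n :=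
  Algebra.subset_adjoin ⟨m, h, rfl⟩

lemma toricR_support {r : AddMonoidAlgebra k (Fin d → ℤ)} (hr : r ∈ toricR k d t n) :
    ∀ μ ∈ r.coeff.support, ∀ i, 0 ≤ n i (ιZ d μ) := by
  classical
  induction hr using Algebra.adjoin_induction with
  | mem x hx =>
    obtain ⟨m, hm, rfl⟩ := hx
    intro μ hμ i
    have := Finsupp.support_single_subset hμ
    simp only [Finset.mem_singleton] at this
    subst this
    exact hm i
  | algebraMap r =>
    intro μ hμ i
    rw [AddMonoidAlgebra.coe_algebraMap] at hμ
    have := Finsupp.support_single_subset hμ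
    simp only [Finset.mem_singleton] at this
    subst this
    rw [ιZ_zero, map_zero]
  | add x y hx hy ihx ihy =>
    intro μ hμ i
    rcases Finset.mem_union.mp (Finsupp.support_add hμ) with h | h
    · exact ihx μ h i
    · exact ihy μ h i
  | mul x y hx hy ihx ihy =>
    intro μ hμ i
    have := AddMonoidAlgebra.support_coeff_mul_subset x y hμ
    rw [Finset.mem_add] at this
    obtain ⟨a, ha, b, hb, rfl⟩ := this
    rw [ιZ_add, map_add]
    exact add_nonneg (ihx a ha i) (ihy b hb i)

lemma mem_conicA_iff {v : Fin d → ℝ} {f : AddMonoidAlgebra k (Fin d → ℤ)} :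
    f ∈ conicA k d t n v ↔ ∀ μ ∈ f.coeff.support, ∀ i, 0 ≤ n i (ιZ d μ - v) := by
  classical
  constructor
  · intro hf
    let T : Submodule ↥(toricR k d t n) (AddMonoidAlgebra k (Fin d → ℤ)) :=
      { carrier := {g | ∀ μ ∈ g.coeff.support, ∀ i, 0 ≤ n i (ιZ d μ - v)}
        add_mem' := by
          intro a b ha hb μ hμ i
          rcases Finset.mem_union.mp (Finsupp.support_add hμ) with h | h
          · exact ha μ h i
          · exact hb μ h i
        zero_mem' := by
          intro μ hμ i
          simp at hμ
        smul_mem' := by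
          intro r g hg μ hμ i
          have hrg : (r : AddMonoidAlgebra k (Fin d → ℤ)) * g = r • g := rfl
          rw [← hrg] at hμ
          have := AddMonoidAlgebra.support_coeff_mul_subset (r : AddMonoidAlgebra k (Fin d → ℤ)) g hμ
          rw [Finset.mem_add] at this
          obtain ⟨a, ha, b, hb, rfl⟩ := this
          have h1 := toricR_support n r.2 a ha i
          have h2 := hg b hb i
          have : ιZ d (a + b) - v = ιZ d a + (ιZ d b - v) := by
            rw [ιZ_add]; abel
          rw [this, map_add]
          exact add_nonneg h1 h2 }
    have hle : conicA k d t n v ≤ T := by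
      rw [conicA, Submodule.span_le]
      rintro g ⟨m, hm, rfl⟩ μ hμ i
      have := Finsupp.support_single_subset hμ
      simp only [Finset.mem_singleton] at this
      subst this
      exact hm i
    exact hle hf
  · intro hf
    rw [← AddMonoidAlgebra.sum_coeff_single f]
    refine Submodule.sum_mem _ (fun μ hμ => ?_)
    have hμ' : AddMonoidAlgebra.single μ (1:k) ∈ conicA k d t n v :=
      Submodule.subset_span ⟨μ, hf μ hμ, rfl⟩
    have h0 : AddMonoidAlgebra.single 0 (f.coeff μ) ∈ toricR k d t n := by
      have := Subalgebra.algebraMap_mem (toricR k d t n) (f.coeff μ)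
      rwa [AddMonoidAlgebra.coe_algebraMap] at this
    have : AddMonoidAlgebra.single μ (f.coeff μ) =
        (⟨AddMonoidAlgebra.single 0 (f.coeff μ), h0⟩ : ↥(toricR k d t n)) •
          AddMonoidAlgebra.single μ (1:k) := by
      show AddMonoidAlgebra.single μ (f.coeff μ) = AddMonoidAlgebra.single 0 (f.coeff μ) * AddMonoidAlgebra.single μ 1
      rw [AddMonoidAlgebra.single_mul_single, zero_add, mul_one]
    rw [this]
    exact Submodule.smul_mem _ _ hμ'

end Alg

section Main

variable {k : Type} [Field k] {d : ℕ} (n : Fin d → ((Fin d → ℝ) →ₗ[ℝ] ℝ))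

lemma part1
    (hint : ∀ i (m : Fin d → ℤ), ∃ z : ℤ, n i (ιZ d m) = z)
    (hprim : ∀ i (z : ℤ), ∃ m : Fin d → ℤ, n i (ιZ d m) = z)
    (hsimp : LinearIndependent ℝ n)
    (v w v₀ w₀ : Fin d → ℝ)
    (hv₀ : ∀ i, n i v₀ = (⌈n i v⌉ : ℝ)) (hw₀ : ∀ i, n i w₀ = (⌈n i w⌉ : ℝ)) :
    {f : AddMonoidAlgebra k (Fin d → ℤ) |
        ∀ a ∈ conicA k d d n v, f * a ∈ conicA k d d n w} =
      (conicA k d d n (w₀ - v₀) : Set (AddMonoidAlgebra k (Fin d → ℤ))) := by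
  classical
  ext f
  simp only [Set.mem_setOf_eq, SetLike.mem_coe]
  constructor
  · intro hf
    rw [mem_conicA_iff]
    intro μ hμ i
    -- find a lattice point m with n i (ι m) = ⌈n i v⌉ and m ∈ C + v
    obtain ⟨m₀, hm₀⟩ := hprim i ⌈n i v⌉
    obtain ⟨m, hmi, hmj⟩ := exists_eq_ge n hint hsimp m₀ i (fun j => n j v)
    rw [hm₀] at hmi
    have hmem : AddMonoidAlgebra.single m (1:k) ∈ conicA k d d n v := by
      refine Submodule.subset_span ⟨m, fun j => ?_, rfl⟩
      rw [map_sub, sub_nonneg]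
      by_cases hj : j = i
      · subst hj; rw [hmi]; exact Int.le_ceil _
      · exact hmj j hj
    have hfw := hf _ hmem
    rw [mem_conicA_iff] at hfw
    have hsupp : μ + m ∈ (f * AddMonoidAlgebra.single m (1:k)).coeff.support := by
      rw [Finsupp.mem_support_iff, AddMonoidAlgebra.coeff_mul_single_apply, add_neg_cancel_right,
        mul_one]
      exact Finsupp.mem_support_iff.mp hμ
    have h1 := hfw _ hsupp i
    rw [map_sub, sub_nonneg] at h1
    have h2 : (⌈n i w⌉ : ℝ) ≤ n i (ιZ d (μ + m)) := by
      rw [← ceil_le_val n hint]; exact h1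
    rw [ιZ_add, map_add, hmi] at h2
    rw [map_sub, sub_nonneg, map_sub, hv₀, hw₀]
    linarith
  · intro hf a ha
    rw [mem_conicA_iff] at hf ha ⊢
    intro μ hμ i
    have := AddMonoidAlgebra.support_coeff_mul_subset f a hμ
    rw [Finset.mem_add] at this
    obtain ⟨α, hα, β, hβ, rfl⟩ := this
    have h1 := hf α hα i
    rw [map_sub, sub_nonneg, map_sub, hv₀, hw₀] at h1
    have h2 := ha β hβ i
    rw [map_sub, sub_nonneg] at h2
    have h2' : (⌈n i v⌉ : ℝ) ≤ n i (ιZ d β) := by rw [← ceil_le_val n hint]; exact h2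
    have h3 : n i w ≤ (⌈n i w⌉ : ℝ) := Int.le_ceil _
    rw [map_sub, sub_nonneg, ιZ_add, map_add]
    linarith


lemma single_conicA_mem {v : Fin d → ℝ} {m : Fin d → ℤ} (hm : ∀ i, 0 ≤ n i (ιZ d m - v)) :
    AddMonoidAlgebra.single m (1:k) ∈ conicA k d d n v :=
  Submodule.subset_span ⟨m, hm, rfl⟩

lemma key_comm
    (hint : ∀ i (m : Fin d → ℤ), ∃ z : ℤ, n i (ιZ d m) = z)
    (hsimp : LinearIndependent ℝ n)
    (v w : Fin d → ℝ)
    (φ : ↥(conicA k d d n v) →ₗ[↥(toricR k d d n)] ↥(conicA k d d n w))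
    {m m' : Fin d → ℤ}
    (hm : ∀ i, 0 ≤ n i (ιZ d m - v)) (hm' : ∀ i, 0 ≤ n i (ιZ d m' - v)) :
    (φ ⟨AddMonoidAlgebra.single m 1, single_conicA_mem n hm⟩ :
        AddMonoidAlgebra k (Fin d → ℤ)) * AddMonoidAlgebra.single m' 1
    = (φ ⟨AddMonoidAlgebra.single m' 1, single_conicA_mem n hm'⟩ :
        AddMonoidAlgebra k (Fin d → ℤ)) * AddMonoidAlgebra.single m 1 := by
  obtain ⟨c, hc⟩ := exists_ge n hint hsimp (fun i => max 0 (n i (ιZ d m') - n i (ιZ d m)))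
  have hc0 : ∀ i, 0 ≤ n i (ιZ d c) := fun i => le_trans (le_max_left _ _) (hc i)
  have hc' : ∀ i, 0 ≤ n i (ιZ d (c + m - m')) := by
    intro i
    rw [ιZ_sub, ιZ_add, map_sub, map_add]
    have := le_trans (le_max_right 0 (n i (ιZ d m') - n i (ιZ d m))) (hc i)
    linarith
  set r : ↥(toricR k d d n) := ⟨AddMonoidAlgebra.single c 1, single_mem_toricR n hc0⟩ with hr
  set r' : ↥(toricR k d d n) :=
    ⟨AddMonoidAlgebra.single (c + m - m') 1, single_mem_toricR n hc'⟩ with hr'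
  set X : ↥(conicA k d d n v) :=
    ⟨AddMonoidAlgebra.single m 1, single_conicA_mem n hm⟩ with hX
  set X' : ↥(conicA k d d n v) :=
    ⟨AddMonoidAlgebra.single m' 1, single_conicA_mem n hm'⟩ with hX'
  have e1 : r • X = r' • X' := by
    apply Subtype.ext
    show AddMonoidAlgebra.single c (1:k) * AddMonoidAlgebra.single m 1
      = AddMonoidAlgebra.single (c + m - m') 1 * AddMonoidAlgebra.single m' 1
    rw [AddMonoidAlgebra.single_mul_single, AddMonoidAlgebra.single_mul_single, one_mul]
    congr 1
    abel
  have e2 := congrArg φ e1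
  rw [map_smul, map_smul] at e2
  have e3 : AddMonoidAlgebra.single c (1:k) * (φ X : AddMonoidAlgebra k (Fin d → ℤ))
      = AddMonoidAlgebra.single (c + m - m') 1 * (φ X' : AddMonoidAlgebra k (Fin d → ℤ)) :=
    congrArg Subtype.val e2
  have hcne : AddMonoidAlgebra.single c (1:k) ≠ 0 :=
    by
    simp [Finsupp.single_eq_zero]
  apply mul_left_cancel₀ hcne
  calc AddMonoidAlgebra.single c (1:k) *
        ((φ X : AddMonoidAlgebra k (Fin d → ℤ)) * AddMonoidAlgebra.single m' 1)
      = (AddMonoidAlgebra.single c 1 * (φ X : AddMonoidAlgebra k (Fin d → ℤ))) *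
          AddMonoidAlgebra.single m' 1 := by ring
    _ = (AddMonoidAlgebra.single (c + m - m') 1 *
          (φ X' : AddMonoidAlgebra k (Fin d → ℤ))) * AddMonoidAlgebra.single m' 1 := by rw [e3]
    _ = (AddMonoidAlgebra.single (c + m - m') 1 * AddMonoidAlgebra.single m' 1) *
          (φ X' : AddMonoidAlgebra k (Fin d → ℤ)) := by ring
    _ = AddMonoidAlgebra.single (c + m) (1:k) *
          (φ X' : AddMonoidAlgebra k (Fin d → ℤ)) := by
        rw [AddMonoidAlgebra.single_mul_single, one_mul]
        congr 2
        abel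
    _ = (AddMonoidAlgebra.single c 1 * AddMonoidAlgebra.single m 1) *
          (φ X' : AddMonoidAlgebra k (Fin d → ℤ)) := by
        rw [AddMonoidAlgebra.single_mul_single, one_mul]
    _ = AddMonoidAlgebra.single c (1:k) *
        ((φ X' : AddMonoidAlgebra k (Fin d → ℤ)) * AddMonoidAlgebra.single m 1) := by ring

set_option maxHeartbeats 4000000 in
lemma part2
    (hint : ∀ i (m : Fin d → ℤ), ∃ z : ℤ, n i (ιZ d m) = z)
    (hprim : ∀ i (z : ℤ), ∃ m : Fin d → ℤ, n i (ιZ d m) = z)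
    (hsimp : LinearIndependent ℝ n)
    (v w v₀ w₀ : Fin d → ℝ)
    (hv₀ : ∀ i, n i v₀ = (⌈n i v⌉ : ℝ)) (hw₀ : ∀ i, n i w₀ = (⌈n i w⌉ : ℝ)) :
    Nonempty ((↥(conicA k d d n v) →ₗ[↥(toricR k d d n)] ↥(conicA k d d n w))
      ≃ₗ[↥(toricR k d d n)] ↥(conicA k d d n (w₀ - v₀))) := by
  classical
  have P1 := part1 (k := k) n hint hprim hsimp v w v₀ w₀ hv₀ hw₀
  rw [Set.ext_iff] at P1
  have hP : ∀ f : AddMonoidAlgebra k (Fin d → ℤ),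
      (∀ a ∈ conicA k d d n v, f * a ∈ conicA k d d n w) ↔
        f ∈ conicA k d d n (w₀ - v₀) := fun f => P1 f
  -- a deep lattice point in C + v
  obtain ⟨ms, hms⟩ := exists_ge n hint hsimp (fun i => n i v)
  have hmv : ∀ i, 0 ≤ n i (ιZ d ms - v) := by
    intro i; rw [map_sub, sub_nonneg]; exact hms i
  have hsne : AddMonoidAlgebra.single ms (1:k) ≠ 0 := by
    simp [Finsupp.single_eq_zero]
  -- the multiplication map
  set Φ : ↥(conicA k d d n (w₀ - v₀)) →ₗ[↥(toricR k d d n)]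
      (↥(conicA k d d n v) →ₗ[↥(toricR k d d n)] ↥(conicA k d d n w)) :=
    { toFun := fun f =>
        { toFun := fun a => ⟨(f : AddMonoidAlgebra k (Fin d → ℤ)) * a,
            ((hP f).mpr f.2) a a.2⟩
          map_add' := fun a b => Subtype.ext (mul_add _ _ _)
          map_smul' := fun r a => Subtype.ext (mul_left_comm _ _ _) }
      map_add' := fun f g => LinearMap.ext fun a => Subtype.ext (add_mul _ _ _)
      map_smul' := fun r f => LinearMap.ext fun a => Subtype.ext (mul_assoc _ _ _) } with hΦ
  have hinj : Function.Injective Φ := by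
    intro f g hfg
    have h1 := congrArg (fun ψ => ((ψ ⟨AddMonoidAlgebra.single ms 1,
      single_conicA_mem n hmv⟩ : ↥(conicA k d d n w)) :
        AddMonoidAlgebra k (Fin d → ℤ))) hfg
    simp only [hΦ, LinearMap.coe_mk, AddHom.coe_mk] at h1
    exact Subtype.ext (mul_right_cancel₀ hsne h1)
  have hsurj : Function.Surjective Φ := by
    intro φ
    set fφ : AddMonoidAlgebra k (Fin d → ℤ) :=
      (φ ⟨AddMonoidAlgebra.single ms 1, single_conicA_mem n hmv⟩ :
        AddMonoidAlgebra k (Fin d → ℤ)) * AddMonoidAlgebra.single (-ms) 1 with hfφ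
    have key : ∀ x (hx : x ∈ conicA k d d n v),
        fφ * x = ((φ ⟨x, hx⟩ : ↥(conicA k d d n w)) : AddMonoidAlgebra k (Fin d → ℤ)) := by
      intro x hx
      induction hx using Submodule.span_induction with
      | mem x hxs =>
        obtain ⟨m, hm, rfl⟩ := hxs
        have kc := key_comm n hint hsimp v w φ hmv hm
        calc fφ * AddMonoidAlgebra.single m 1
            = ((φ ⟨AddMonoidAlgebra.single ms 1, single_conicA_mem n hmv⟩ :
                ↥(conicA k d d n w)) : AddMonoidAlgebra k (Fin d → ℤ)) *
              AddMonoidAlgebra.single m 1 * AddMonoidAlgebra.single (-ms) 1 := by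
              rw [hfφ]; ring
          _ = ((φ ⟨AddMonoidAlgebra.single m 1, single_conicA_mem n hm⟩ :
                ↥(conicA k d d n w)) : AddMonoidAlgebra k (Fin d → ℤ)) *
              AddMonoidAlgebra.single ms 1 * AddMonoidAlgebra.single (-ms) 1 := by
              rw [kc]
          _ = ((φ ⟨AddMonoidAlgebra.single m 1, single_conicA_mem n hm⟩ :
                ↥(conicA k d d n w)) : AddMonoidAlgebra k (Fin d → ℤ)) *
              (AddMonoidAlgebra.single ms 1 * AddMonoidAlgebra.single (-ms) 1) := by
              ring
          _ = ((φ ⟨AddMonoidAlgebra.single m 1, single_conicA_mem n hm⟩ :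
                ↥(conicA k d d n w)) : AddMonoidAlgebra k (Fin d → ℤ)) := by
              rw [AddMonoidAlgebra.single_mul_single, one_mul]
              have : ms + -ms = 0 := by abel
              rw [this, ← AddMonoidAlgebra.one_def, mul_one]
      | zero =>
        have h0 : (⟨0, Submodule.zero_mem _⟩ : ↥(conicA k d d n v)) = 0 := rfl
        rw [h0, map_zero, mul_zero]
        rfl
      | add x y hx hy ihx ihy =>
        have hxy : (⟨x + y, Submodule.add_mem _ hx hy⟩ : ↥(conicA k d d n v))
            = ⟨x, hx⟩ + ⟨y, hy⟩ := rfl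
        rw [hxy, map_add, mul_add, ihx, ihy]
        rfl
      | smul r x hx ih =>
        have hrx : (⟨r • x, Submodule.smul_mem _ r hx⟩ : ↥(conicA k d d n v))
            = r • ⟨x, hx⟩ := rfl
        rw [hrx, map_smul]
        have hsx : r • x = (r : AddMonoidAlgebra k (Fin d → ℤ)) * x := rfl
        rw [hsx, mul_left_comm, ih]
        rfl
    have hfmem : fφ ∈ conicA k d d n (w₀ - v₀) := by
      refine (hP fφ).mp (fun a ha => ?_)
      rw [key a ha]
      exact (φ ⟨a, ha⟩).2
    refine ⟨⟨fφ, hfmem⟩, ?_⟩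
    refine LinearMap.ext fun a => Subtype.ext ?_
    show fφ * (a : AddMonoidAlgebra k (Fin d → ℤ)) = _
    rw [key a a.2]
  exact ⟨(LinearEquiv.ofBijective Φ ⟨hinj, hsurj⟩).symm⟩

end Main

/-- in the simplicial case (`t = d`, `n` linearly independent), with
`v₀, w₀` the unique points with `n i v₀ = ⌈n i v⌉` and `n i w₀ = ⌈n i w⌉`, one has
`{f ∈ L : f · A_v ⊆ A_w} = A_{w₀ - v₀}` as subsets of `L`; in particular
`Hom_R(A_v, A_w)` is isomorphic as an `R`-module to the conic module `A_{w₀ - v₀}`. -/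
theorem stmt_17
    (d : ℕ) (hd : 1 ≤ d)
    (n : Fin d → ((Fin d → ℝ) →ₗ[ℝ] ℝ))
    (hne : ∀ i, n i ≠ 0)
    (hint : ∀ i (m : Fin d → ℤ), ∃ z : ℤ, n i (ιZ d m) = z)
    (hprim : ∀ i (z : ℤ), ∃ m : Fin d → ℤ, n i (ιZ d m) = z)
    (C : Set (Fin d → ℝ)) (hC : C = {x | ∀ i, 0 ≤ n i x})
    (hfull : (interior C).Nonempty)
    (hpointed : Submodule.span ℝ (Set.range n) = ⊤)
    (hirr : ∀ i, C ⊂ {x | ∀ j, j ≠ i → 0 ≤ n j x})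
    (hsimp : LinearIndependent ℝ n)
    (k : Type) [Field k]
    (v w v₀ w₀ : Fin d → ℝ)
    (hv₀ : ∀ i, n i v₀ = (⌈n i v⌉ : ℝ)) (hw₀ : ∀ i, n i w₀ = (⌈n i w⌉ : ℝ)) :
    {f : AddMonoidAlgebra k (Fin d → ℤ) |
        ∀ a ∈ conicA k d d n v, f * a ∈ conicA k d d n w} =
      (conicA k d d n (w₀ - v₀) : Set (AddMonoidAlgebra k (Fin d → ℤ))) ∧
    Nonempty ((↥(conicA k d d n v) →ₗ[↥(toricR k d d n)] ↥(conicA k d d n w))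
      ≃ₗ[↥(toricR k d d n)] ↥(conicA k d d n (w₀ - v₀))) := by
  exact ⟨part1 n hint hprim hsimp v w v₀ w₀ hv₀ hw₀,
    part2 n hint hprim hsimp v w v₀ w₀ hv₀ hw₀⟩
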